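/- Let D be a two-dimensional monodromy T-module with decomposition D = D⁽¹⁾ ⊕ D⁽²⁾ as above and j₀ the filtration index with F^{j₀}D free rank-1 and F^{j₀}D ∩ Ker(N) = 0. Then there exists a unique element L(D) ∈ T_K such that x − L(D)·N(x) ∈ F^{j₀}D for every x ∈ D⁽²⁾. -/

import Mathlib

open TensorProduct

set_option maxHeartbeats 1000000
set_option synthInstance.maxHeartbeats 100000

/-- A free module of finrank one has a generator with trivial annihilator. -/
lemma rank_one_gen {R M : Type*} [CommRing R] [Nontrivial R] [AddCommGroup M] [Module R M]
    [Module.Finite R M] (hfree : Module.Free R M) (h : Module.finrank R M = 1) :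
    ∃ e : M, (∀ c : R, c • e = 0 → c = 0) ∧ ∀ y : M, ∃ c : R, y = c • e := by
  have hcard : Fintype.card (Module.Free.ChooseBasisIndex R M) = 1 := by
    rw [← Module.finrank_eq_card_chooseBasisIndex, h]
  let b0 := Module.Free.chooseBasis R M
  let b : Module.Basis (Fin 1) R M := b0.reindex (Fintype.equivFinOfCardEq hcard)
  refine ⟨b 0, ?_, ?_⟩
  · intro c hc
    have := congrArg (fun z => b.repr z 0) hc
    simpa [map_smul, Finsupp.smul_apply, b.repr_self] using this
  · intro y
    refine ⟨b.repr y 0, ?_⟩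
    have := b.sum_repr y
    simpa [Fin.sum_univ_one] using this.symm


/-- The canonical decomposition of a monodromy module (Lemma 2.3). -/
def MonodromyDecomp {R D : Type*} [CommRing R] [AddCommGroup D] [Module R D]
    (φ : D →+ D) (N : D →ₗ[R] D) (D1 D2 : Submodule R D) : Prop :=
  (∀ x ∈ D1, φ x ∈ D1) ∧ (∀ x ∈ D2, φ x ∈ D2) ∧
  Module.Free R D1 ∧ Module.finrank R D1 = 1 ∧
  Module.Free R D2 ∧ Module.finrank R D2 = 1 ∧
  IsCompl D1 D2 ∧ (∀ x ∈ D2, N x ∈ D1) ∧ Set.BijOn ⇑N ↑D2 ↑D1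

/-- For a two-dimensional monodromy `T`-module `D` with canonical decomposition
`D = D⁽¹⁾ ⊕ D⁽²⁾` (`D⁽¹⁾ = Ker N`) and filtration index `j₀` such that `F^{j₀}D` is free of
rank one with `F^{j₀}D ∩ Ker N = 0`, there is a unique `L(D) ∈ T_K` such that
`x − L(D)·N(x) ∈ F^{j₀}D` for every `x ∈ D⁽²⁾`. -/
theorem stmt4 {p : ℕ} [Fact p.Prime]
    {K : Type*} [Field K] [Algebra ℚ_[p] K] (σ : K ≃+* K)
    {T : Type*} [CommRing T] [Algebra ℚ_[p] T]
      [FiniteDimensional ℚ_[p] T] [IsSemisimpleRing T]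
    {D : Type*} [AddCommGroup D] [Module (K ⊗[ℚ_[p]] T) D]
    [Module K D] [IsScalarTower K (K ⊗[ℚ_[p]] T) D] [FiniteDimensional K D]
    (φ : D →+ D) (hφbij : Function.Bijective φ)
    (hφσ : ∀ (c : K) (x : D), φ (c • x) = σ c • φ x)
    (hφT : ∀ (t : T) (x : D), φ (((1 : K) ⊗ₜ[ℚ_[p]] t) • x) = ((1 : K) ⊗ₜ[ℚ_[p]] t) • φ x)
    (N : D →ₗ[K ⊗[ℚ_[p]] T] D)
    (hNφ : ∀ x, N (φ x) = (algebraMap ℚ_[p] K (p : ℚ_[p])) • φ (N x))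
    (Fil : ℤ → Submodule (K ⊗[ℚ_[p]] T) D)
    (hfil : Antitone Fil) (hexh : ∃ i, Fil i = ⊤) (hsep : ∃ i, Fil i = ⊥)
    (hfree2 : Module.Free (K ⊗[ℚ_[p]] T) D)
    (hrank2 : Module.finrank (K ⊗[ℚ_[p]] T) D = 2)
    (hexact : LinearMap.range N = LinearMap.ker N)
    (j₀ : ℤ) (hfree1 : Module.Free (K ⊗[ℚ_[p]] T) (Fil j₀))
    (hrank1 : Module.finrank (K ⊗[ℚ_[p]] T) (Fil j₀) = 1)
    (hdisj : Fil j₀ ⊓ LinearMap.ker N = ⊥)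
    (D1 D2 : Submodule (K ⊗[ℚ_[p]] T) D)
    (hdecomp : MonodromyDecomp φ N D1 D2)
    (hD1 : D1 = LinearMap.ker N) :
    ∃! L : K ⊗[ℚ_[p]] T, ∀ x ∈ D2, x - L • N x ∈ Fil j₀ := by
  obtain ⟨-, -, -, -, hfreeD2, hrankD2, hcompl, hND2, hbij⟩ := hdecomp
  -- R is nontrivial
  have hnt : Nontrivial (K ⊗[ℚ_[p]] T) := by
    by_contra h
    rw [not_nontrivial_iff_subsingleton] at h
    have h1 : Module.rank (K ⊗[ℚ_[p]] T) D = 1 := rank_subsingleton _ _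
    have h2 : Module.finrank (K ⊗[ℚ_[p]] T) D = 1 := by
      rw [Module.finrank, h1, map_one]
    omega
  -- Noetherian and finite instances
  haveI : IsNoetherian (K ⊗[ℚ_[p]] T) D := isNoetherian_of_tower K inferInstance
  haveI hf2 : Module.Finite (K ⊗[ℚ_[p]] T) ↥D2 := Module.Finite.iff_fg.mpr (IsNoetherian.noetherian D2)
  haveI hf1 : Module.Finite (K ⊗[ℚ_[p]] T) ↥(Fil j₀) := Module.Finite.iff_fg.mpr (IsNoetherian.noetherian _)
  haveI : IsArtinian (K ⊗[ℚ_[p]] T) (K ⊗[ℚ_[p]] T) := isArtinian_of_tower K inferInstance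
  -- generator of D2
  obtain ⟨e₂, he₂ann, he₂gen⟩ := rank_one_gen hfreeD2 hrankD2
  set e : D := (e₂ : D) with he
  have hemem : e ∈ D2 := e₂.2
  have heann : ∀ c : K ⊗[ℚ_[p]] T, c • e = 0 → c = 0 := by
    intro c hc
    exact he₂ann c (Subtype.ext (by rw [Submodule.coe_smul, ZeroMemClass.coe_zero]; exact hc))
  have hegen : ∀ y ∈ D2, ∃ c : K ⊗[ℚ_[p]] T, y = c • e := by
    intro y hy
    obtain ⟨c, hc⟩ := he₂gen ⟨y, hy⟩
    exact ⟨c, by simpa only [Submodule.coe_smul] using congrArg Subtype.val hc⟩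
  -- generator of Fil j₀
  obtain ⟨f₀, hf₀ann, hf₀gen⟩ := rank_one_gen hfree1 hrank1
  set f : D := (f₀ : D) with hfdef
  have hfmem : f ∈ Fil j₀ := f₀.2
  have hfann : ∀ c : K ⊗[ℚ_[p]] T, c • f = 0 → c = 0 := by
    intro c hc
    exact hf₀ann c (Subtype.ext (by rw [Submodule.coe_smul, ZeroMemClass.coe_zero]; exact hc))
  -- decompose f = y + z with y ∈ D1, z ∈ D2
  have hsup : D1 ⊔ D2 = ⊤ := codisjoint_iff.mp hcompl.codisjoint
  have hfd : f ∈ D1 ⊔ D2 := by rw [hsup]; trivial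
  obtain ⟨y, hy, z, hz, hyz⟩ := Submodule.mem_sup.mp hfd
  obtain ⟨g, hg, hNg⟩ := hbij.surjOn hy
  obtain ⟨b, hb⟩ := hegen g hg
  obtain ⟨a, ha⟩ := hegen z hz
  have hfeq : f = b • N e + a • e := by
    rw [← hyz, ← hNg, hb, map_smul, ha]
  -- a is a non-zero-divisor
  have hazd : ∀ c : K ⊗[ℚ_[p]] T, c * a = 0 → c = 0 := by
    intro c hc
    have h1 : c • f = c • y := by
      rw [← hyz, smul_add, ha, smul_smul, hc, zero_smul, add_zero]
    have h2 : c • f ∈ LinearMap.ker N := by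
      rw [h1]
      have : y ∈ LinearMap.ker N := hD1 ▸ hy
      exact Submodule.smul_mem _ _ this
    have h3 : c • f ∈ Fil j₀ ⊓ LinearMap.ker N :=
      ⟨Submodule.smul_mem _ _ hfmem, h2⟩
    rw [hdisj] at h3
    exact hfann c h3
  -- a is a unit
  have hunit : ∃ a' : K ⊗[ℚ_[p]] T, a' * a = 1 := by
    have hinj : Function.Injective (LinearMap.toSpanSingleton (K ⊗[ℚ_[p]] T) (K ⊗[ℚ_[p]] T) a) := by
      intro u v huv
      simp only [LinearMap.toSpanSingleton_apply, smul_eq_mul] at huv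
      have h0 : (u - v) * a = 0 := by rw [sub_mul, huv, sub_self]
      exact sub_eq_zero.mp (hazd (u - v) h0)
    obtain ⟨a', ha'⟩ := IsArtinian.surjective_of_injective_endomorphism
      (LinearMap.toSpanSingleton (K ⊗[ℚ_[p]] T) (K ⊗[ℚ_[p]] T) a) hinj 1
    exact ⟨a', by simpa [smul_eq_mul] using ha'⟩
  obtain ⟨a', haa⟩ := hunit
  have hNe1 : N e ∈ D1 := hND2 e hemem
  have hNNe : N (N e) = 0 := by
    have : N e ∈ LinearMap.ker N := hD1 ▸ hNe1
    exact this
  -- the L-invariant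
  have hprop : ∀ x ∈ D2, x - (-(b * a')) • N x ∈ Fil j₀ := by
    intro x hx
    obtain ⟨c, rfl⟩ := hegen x hx
    rw [map_smul]
    have h2 : c * a' * a = c := by rw [mul_assoc, haa, mul_one]
    have hfe : (c * a') • f = (c * a' * b) • N e + c • e := by
      rw [hfeq, smul_add, smul_smul, smul_smul, h2]
    have key : c • e - (-(b * a')) • (c • N e) = (c * a') • f := by
      rw [hfe, smul_smul, neg_mul, neg_smul, sub_neg_eq_add,
        show b * a' * c = c * a' * b by ring, add_comm]
    rw [key]
    exact Submodule.smul_mem _ _ hfmem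
  refine ⟨-(b * a'), hprop, ?_⟩
  intro L hL
  have hd : (L - (-(b * a'))) • N e ∈ Fil j₀ := by
    have h := Submodule.sub_mem _ (hprop e hemem) (hL e hemem)
    have heq : (e - (-(b * a')) • N e) - (e - L • N e) = (L - (-(b * a'))) • N e := by
      rw [sub_smul]; abel
    rwa [heq] at h
  have hdk : (L - (-(b * a'))) • N e ∈ LinearMap.ker N := by
    rw [LinearMap.mem_ker, map_smul, hNNe, smul_zero]
  have hz0 : (L - (-(b * a'))) • N e = 0 := by
    have : (L - (-(b * a'))) • N e ∈ Fil j₀ ⊓ LinearMap.ker N := ⟨hd, hdk⟩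
    rwa [hdisj] at this
  have hek : (L - (-(b * a'))) • e ∈ D1 := by
    rw [hD1]
    simp only [LinearMap.mem_ker, map_smul]
    exact hz0
  have hez : (L - (-(b * a'))) • e = 0 :=
    Submodule.disjoint_def.mp hcompl.disjoint _ hek (Submodule.smul_mem _ _ hemem)
  exact sub_eq_zero.mp (heann _ hez)
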